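/- Let θ ≥ 1 and x ≥ 2, and set s_θ := (θx − √(θ²x² − 4θ²))/(2θ²) and u_θ := 1 − s_θ. Then 0 < s_θ ≤ 1/θ, and the function g(u) := −(1/2)·θxu − (θ²/4)·(1−u)² − (1/2)·log(1−u) attains its minimum over the interval [1 − 1/θ, 1) exactly at u = u_θ: for every u ∈ [1 − 1/θ, 1), g(u) ≥ g(u_θ). -/

import Mathlib

noncomputable section

/-- The `u`-dependent part of the large-deviation rate function in the regime
`θ(1-u) ≤ 1`: `g(u) = -(1/2)θxu - (θ²/4)(1-u)² - (1/2)log(1-u)`. -/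
def gfun (θ x u : ℝ) : ℝ :=
  -(1 / 2) * (θ * x * u) - θ ^ 2 / 4 * (1 - u) ^ 2 - (1 / 2) * Real.log (1 - u)

/-- `u_θ = 1 - (θx - √(θ²x² - 4θ²))/(2θ²)`, solving `θ²(1-u)² - θx(1-u) + 1 = 0`. -/
def uTheta (θ x : ℝ) : ℝ :=
  1 - (θ * x - Real.sqrt (θ ^ 2 * x ^ 2 - 4 * θ ^ 2)) / (2 * θ ^ 2)

set_option maxHeartbeats 1000000

lemma gfun_hasDerivAt (θ x u : ℝ) (hu : u < 1) :
    HasDerivAt (gfun θ x)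
      (-(1 / 2) * (θ * x) + θ ^ 2 / 2 * (1 - u) + (1 / 2) / (1 - u)) u := by
  have h1 : HasDerivAt (fun u : ℝ => 1 - u) (-1) u := by
    simpa using (hasDerivAt_id u).const_sub 1
  have hne : (1 : ℝ) - u ≠ 0 := by linarith
  have h2 : HasDerivAt (fun u : ℝ => Real.log (1 - u)) (-1 / (1 - u)) u := h1.log hne
  have h3 : HasDerivAt (fun u : ℝ => (1 - u) ^ 2) ((2 : ℕ) * (1 - u) ^ 1 * (-1)) u :=
    h1.pow 2
  have h4 : HasDerivAt (fun u : ℝ => θ * x * u) (θ * x) u := by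
    simpa using (hasDerivAt_id u).const_mul (θ * x)
  have h := ((h4.const_mul (-(1/2:ℝ))).sub (h3.const_mul (θ^2/4))).sub
      (h2.const_mul (1/2:ℝ))
  have heq : gfun θ x = fun u => -(1/2:ℝ) * (θ * x * u) - θ^2/4 * ((1-u)^2)
      - (1/2) * Real.log (1 - u) := by
    funext v; simp [gfun]
  rw [heq]
  refine h.congr_deriv ?_
  ring

/-- For `θ ≥ 1` and `x ≥ 2`, with `s_θ = (θx - √(θ²x² - 4θ²))/(2θ²)` and `u_θ = 1 - s_θ`,
one has `0 < s_θ ≤ 1/θ` and `g` attains its minimum over `[1 - 1/θ, 1)` at `u_θ`. -/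
theorem gfun_min_supercritical (θ x : ℝ) (hθ : 1 ≤ θ) (hx : 2 ≤ x) :
    0 < (θ * x - Real.sqrt (θ ^ 2 * x ^ 2 - 4 * θ ^ 2)) / (2 * θ ^ 2) ∧
    (θ * x - Real.sqrt (θ ^ 2 * x ^ 2 - 4 * θ ^ 2)) / (2 * θ ^ 2) ≤ 1 / θ ∧
    uTheta θ x ∈ Set.Ico (1 - 1 / θ) 1 ∧
    ∀ u ∈ Set.Ico (1 - 1 / θ) 1, gfun θ x (uTheta θ x) ≤ gfun θ x u := by
  have hθ0 : (0:ℝ) < θ := by linarith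
  set y := Real.sqrt (x ^ 2 - 4) with hy
  have hy0 : 0 ≤ y := Real.sqrt_nonneg _
  have hy2 : y ^ 2 = x ^ 2 - 4 := Real.sq_sqrt (by nlinarith)
  have hylt : y < x := by nlinarith
  have hsqrt : Real.sqrt (θ ^ 2 * x ^ 2 - 4 * θ ^ 2) = θ * y := by
    have : θ ^ 2 * x ^ 2 - 4 * θ ^ 2 = (θ * y) ^ 2 := by rw [mul_pow, hy2]; ring
    rw [this, Real.sqrt_sq (by positivity)]
  set s : ℝ := (x - y) / (2 * θ) with hs
  have hseq : (θ * x - Real.sqrt (θ ^ 2 * x ^ 2 - 4 * θ ^ 2)) / (2 * θ ^ 2) = s := by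
    rw [hsqrt, hs]; field_simp
  have hspos : 0 < s := by apply div_pos <;> [linarith; positivity]
  have hyge : x - 2 ≤ y := by
    by_contra h
    push_neg at h
    nlinarith
  have hsle : s ≤ 1 / θ := by
    rw [div_le_div_iff₀ (by positivity) hθ0]
    nlinarith
  have hu0 : uTheta θ x = 1 - s := by rw [uTheta, hseq]
  have hu0lt : uTheta θ x < 1 := by rw [hu0]; linarith
  have hu0ge : 1 - 1 / θ ≤ uTheta θ x := by rw [hu0]; linarith
  refine ⟨hseq ▸ hspos, hseq ▸ hsle, ⟨hu0ge, hu0lt⟩, ?_⟩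
  -- key: the critical equation θ² s² - θ x s + 1 = 0
  have hcrit : θ ^ 2 * s ^ 2 - θ * x * s + 1 = 0 := by
    rw [hs]
    field_simp
    linear_combination hy2
  -- derivative sign: for 1 - u = t, sign of θ² t² - θ x t + 1 = θ²(t - s)(t - s₂)
  have hderivsign : ∀ u : ℝ, u < 1 →
      deriv (gfun θ x) u = (θ ^ 2 * (1-u) ^ 2 - θ * x * (1-u) + 1) / (2 * (1-u)) := by
    intro u hu
    rw [(gfun_hasDerivAt θ x u hu).deriv]
    have ht : (1:ℝ) - u ≠ 0 := by linarith
    field_simp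
    ring
  have s2eq : θ ^ 2 * s * ((x + y) / (2 * θ)) = 1 := by
    rw [hs]
    field_simp
    nlinarith [hy2]
  have hsum : θ ^ 2 * (s + (x + y) / (2 * θ)) = θ * x := by
    rw [hs]; field_simp; ring
  have key : ∀ u : ℝ, θ ^ 2 * (1 - u) ^ 2 - θ * x * (1 - u) + 1
      = θ ^ 2 * ((1 - u) - s) * ((1 - u) - (x + y) / (2 * θ)) := by
    intro u
    linear_combination (1 - u) * hsum - s2eq
  have hs2 : 1 / θ ≤ (x + y) / (2 * θ) := by
    rw [div_le_div_iff₀ hθ0 (by positivity)]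
    nlinarith
  -- monotone on [u₀, 1)
  have hmono : MonotoneOn (gfun θ x) (Set.Ico (uTheta θ x) 1) := by
    apply monotoneOn_of_deriv_nonneg (convex_Ico _ _)
    · exact fun u hu => (gfun_hasDerivAt θ x u hu.2).continuousAt.continuousWithinAt
    · intro u hu
      rw [interior_Ico] at hu
      exact (gfun_hasDerivAt θ x u hu.2).differentiableAt.differentiableWithinAt
    · intro u hu
      rw [interior_Ico] at hu
      rw [hderivsign u hu.2]
      obtain ⟨hu1, hu2⟩ := hu
      apply div_nonneg _ (by linarith)
      rw [key u]
      have htlt : 1 - u < s := by rw [hu0] at hu1; linarith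
      have hts2 : 1 - u < (x + y) / (2 * θ) := by
        have : s ≤ 1 / θ := hsle
        linarith
      nlinarith [mul_pos (show (0:ℝ) < s - (1 - u) by linarith)
        (show (0:ℝ) < (x + y) / (2 * θ) - (1 - u) by linarith), mul_pos hθ0 hθ0]
  -- antitone on [1 - 1/θ, u₀]
  have hanti : AntitoneOn (gfun θ x) (Set.Icc (1 - 1/θ) (uTheta θ x)) := by
    apply antitoneOn_of_deriv_nonpos (convex_Icc _ _)
    · exact fun u hu => (gfun_hasDerivAt θ x u (lt_of_le_of_lt hu.2 hu0lt)).continuousAt.continuousWithinAt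
    · intro u hu
      rw [interior_Icc] at hu
      exact (gfun_hasDerivAt θ x u (lt_trans hu.2 hu0lt)).differentiableAt.differentiableWithinAt
    · intro u hu
      rw [interior_Icc] at hu
      have hult : u < 1 := lt_trans hu.2 hu0lt
      rw [hderivsign u hult]
      obtain ⟨hu1, hu2⟩ := hu
      apply div_nonpos_of_nonpos_of_nonneg _ (by linarith)
      rw [key u]
      have hts : s < 1 - u := by rw [hu0] at hu2; linarith
      have htle : 1 - u ≤ (x + y) / (2 * θ) := by linarith
      nlinarith [mul_nonneg (show (0:ℝ) ≤ (1 - u) - s by linarith)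
        (show (0:ℝ) ≤ (x + y) / (2 * θ) - (1 - u) by linarith), mul_pos hθ0 hθ0]
  intro u hu
  rcases le_total u (uTheta θ x) with h | h
  · exact hanti ⟨hu.1, h⟩ ⟨hu0ge, le_refl _⟩ h
  · exact hmono ⟨le_refl _, hu0lt⟩ ⟨h, hu.2⟩ h

end
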